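/- For any real symmetric n×n matrix W with largest eigenvalue ω₁ and smallest eigenvalue ωₙ, the spread satisfies s(W) = ω₁ - ωₙ ≤ sqrt(2‖W‖_F² - (2/n)(tr W)²), where ‖W‖_F is the Frobenius norm. -/

import Mathlib

open Matrix

/-- The spread of a Hermitian real matrix: largest minus smallest eigenvalue. -/
noncomputable def spread {n : ℕ} {A : Matrix (Fin n) (Fin n) ℝ} (hA : A.IsHermitian) : ℝ :=
  (⨆ i, hA.eigenvalues i) - ⨅ i, hA.eigenvalues i

lemma trace_eq_sum_eig {n : ℕ} (W : Matrix (Fin n) (Fin n) ℝ) (hW : W.IsHermitian) :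
    Matrix.trace W = ∑ i, hW.eigenvalues i := by
  conv_lhs => rw [hW.spectral_theorem, Unitary.conjStarAlgAut_apply]
  rw [Matrix.trace_mul_comm, ← mul_assoc, (Matrix.mem_unitaryGroup_iff').mp
    (Matrix.IsHermitian.eigenvectorUnitary hW).2, one_mul, Matrix.trace_diagonal]
  simp

lemma trace_sq_eq_sum_eig_sq {n : ℕ} (W : Matrix (Fin n) (Fin n) ℝ) (hW : W.IsHermitian) :
    Matrix.trace (W * W) = ∑ i, (hW.eigenvalues i) ^ 2 := by
  set U : Matrix (Fin n) (Fin n) ℝ := (hW.eigenvectorUnitary : Matrix (Fin n) (Fin n) ℝ) with hUdef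
  set D : Matrix (Fin n) (Fin n) ℝ := Matrix.diagonal (RCLike.ofReal ∘ hW.eigenvalues) with hDdef
  have hU : star U * U = 1 := (Matrix.mem_unitaryGroup_iff').mp hW.eigenvectorUnitary.2
  have hmat : (U * D * star U) * (U * D * star U) = U * (D * D) * star U := by
    have h1 : (U * D * star U) * (U * D * star U) = U * D * ((star U * U) * (D * star U)) := by
      noncomm_ring
    rw [h1, hU, one_mul]; noncomm_ring
  conv_lhs => rw [hW.spectral_theorem, Unitary.conjStarAlgAut_apply, hmat]
  rw [Matrix.trace_mul_comm, ← mul_assoc, hU, one_mul, hDdef, Matrix.diagonal_mul_diagonal,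
    Matrix.trace_diagonal]
  simp [sq]

theorem mirsky_upper_bound {n : ℕ} (hn : 1 ≤ n)
    (W : Matrix (Fin n) (Fin n) ℝ) (hW : W.IsHermitian) :
    spread hW ≤ Real.sqrt (2 * (∑ i, ∑ j, (W i j) ^ 2) - (2 / n) * (Matrix.trace W) ^ 2) := by
  haveI : Nonempty (Fin n) := ⟨⟨0, hn⟩⟩
  set f := hW.eigenvalues with hf
  obtain ⟨i0, hi0⟩ := Finite.exists_max f
  obtain ⟨i1, hi1⟩ := Finite.exists_min f
  have hsup : (⨆ i, f i) = f i0 :=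
    le_antisymm (ciSup_le hi0) (le_ciSup (Set.Finite.bddAbove (Set.finite_range f)) i0)
  have hinf : (⨅ i, f i) = f i1 :=
    le_antisymm (ciInf_le (Set.Finite.bddBelow (Set.finite_range f)) i1) (le_ciInf hi1)
  have hspread : spread hW = f i0 - f i1 := by rw [spread, hsup, hinf]
  -- key: sum of entry squares equals trace (W*W)
  have hentries : (∑ i, ∑ j, (W i j) ^ 2) = Matrix.trace (W * W) := by
    rw [Matrix.trace]
    simp only [Matrix.diag_apply, Matrix.mul_apply]
    rw [Finset.sum_comm]
    refine Finset.sum_congr rfl fun i _ => Finset.sum_congr rfl fun j _ => ?_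
    have : W j i = W i j := by
      have := congrFun (congrFun hW j) i
      simpa [Matrix.conjTranspose_apply] using this.symm
    rw [this, sq]
  have hnpos : (0:ℝ) < n := by exact_mod_cast hn
  set m : ℝ := Matrix.trace W / n with hm
  have htr : Matrix.trace W = ∑ i, f i := trace_eq_sum_eig W hW
  have hvar : (∑ i, (f i - m) ^ 2) =
      Matrix.trace (W * W) - (1 / n) * (Matrix.trace W) ^ 2 := by
    rw [trace_sq_eq_sum_eig_sq W hW, ← hf]
    have hcard : (Finset.univ : Finset (Fin n)).card = n := by simp
    have : ∑ i, (f i - m) ^ 2 = ∑ i, (f i ^ 2 - 2 * m * f i + m ^ 2) := by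
      refine Finset.sum_congr rfl fun i _ => by ring
    rw [this, Finset.sum_add_distrib, Finset.sum_sub_distrib, ← Finset.mul_sum,
      Finset.sum_const, hcard, ← htr, hm]
    field_simp
    rw [nsmul_eq_mul, ← mul_assoc, ← sq, ← mul_div_assoc, mul_div_cancel_left₀ _ (pow_ne_zero 2 hnpos.ne')]
    ring
  have hEnonneg : 0 ≤ ∑ i, (f i - m) ^ 2 := Finset.sum_nonneg fun i _ => sq_nonneg _
  -- spread² ≤ 2 * variance sum
  have hkey : (f i0 - f i1) ^ 2 ≤ 2 * ∑ i, (f i - m) ^ 2 := by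
    rcases eq_or_ne i0 i1 with h | h
    · rw [h, sub_self]
      have : (0:ℝ)^2 = 0 := by norm_num
      rw [this]
      positivity
    have h2 : (f i0 - m) ^ 2 + (f i1 - m) ^ 2 ≤ ∑ i, (f i - m) ^ 2 := by
      calc (f i0 - m) ^ 2 + (f i1 - m) ^ 2
          = ∑ i ∈ ({i0, i1} : Finset (Fin n)), (f i - m)^2 := by
            rw [Finset.sum_pair h]
        _ ≤ ∑ i, (f i - m) ^ 2 :=
            Finset.sum_le_sum_of_subset_of_nonneg (Finset.subset_univ _)
              (fun i _ _ => sq_nonneg _)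
    nlinarith [sq_nonneg ((f i0 - m) + (f i1 - m))]
  have hsnn : 0 ≤ f i0 - f i1 := sub_nonneg.mpr (hi1 i0)
  rw [hspread]
  rw [show 2 * (∑ i, ∑ j, (W i j) ^ 2) - (2 / n) * (Matrix.trace W) ^ 2
      = 2 * (Matrix.trace (W*W) - (1/n) * (Matrix.trace W)^2) by rw [hentries]; ring,
    ← hvar]
  calc f i0 - f i1 = Real.sqrt ((f i0 - f i1)^2) := by
        rw [Real.sqrt_sq hsnn]
    _ ≤ Real.sqrt (2 * ∑ i, (f i - m) ^ 2) := Real.sqrt_le_sqrt hkey
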